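/- Let ξ^1, …, ξ^M and χ be tangent solutions, and let 𝒲 be the discrete multi-Wroński matrix of ξ^1,…,ξ^M for the partition M = m_1 + … + m_N. For i ∈ {1,…,N}, let 𝕏_i be the (M+1)×(M+1) matrix obtained from 𝒲 by adjoining the column with entry Δ_j^p χ_j in row (j,p) and the bottom row (Δ_i^{m_i} ξ^1_i, …, Δ_i^{m_i} ξ^M_i, Δ_i^{m_i} χ_i); and for i ≠ j, let 𝒲_{ij} be the M×M matrix obtained from 𝒲 by replacing the row (j, m_j−1) by (Δ_i^{m_i} ξ^1_i, …, Δ_i^{m_i} ξ^M_i). Then for all i ≠ k the bilinear identity holds: (det 𝒲)·Δ_k(det 𝕏_i) − (det 𝕏_i)·Δ_k(det 𝒲) + (det 𝕏_k)·T_k(det 𝒲_{ik}) = 0. -/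

import Mathlib

noncomputable section

/-- Shift operator `T_j`: `(T_j f)(n) = f(n + e_j)`. -/
def T {N : ℕ} (j : Fin N) (f : (Fin N → ℤ) → ℝ) : (Fin N → ℤ) → ℝ :=
  fun n => f (n + Pi.single j 1)

/-- Difference operator `Δ_j = T_j − 1`. -/
def Δ {N : ℕ} (j : Fin N) (f : (Fin N → ℤ) → ℝ) : (Fin N → ℤ) → ℝ :=
  fun n => f (n + Pi.single j 1) - f n

/-- The discrete multi-Wroński matrix `𝒲(n)` of the `M = m_1 + ⋯ + m_N` tangent
solutions `ξ^a` (`a` ranges over the canonical `M`-element index set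
`Σ j : Fin N, Fin (m j)`): its row `(j, p)` is `(Δ_j^p ξ^a_j(n))_a`. -/
def Wmat {N : ℕ} (m : Fin N → ℕ)
    (ξ : (Σ j : Fin N, Fin (m j)) → Fin N → (Fin N → ℤ) → ℝ) (n : Fin N → ℤ) :
    Matrix (Σ j : Fin N, Fin (m j)) (Σ j : Fin N, Fin (m j)) ℝ :=
  Matrix.of fun r a => (Δ r.1)^[(r.2 : ℕ)] (ξ a r.1) n

/-- The index `(k, m_k − 1)` of the last row of the `k`-th block. -/
def lastRow {N : ℕ} (m : Fin N → ℕ) (k : Fin N) (h : 0 < m k) :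
    Σ j : Fin N, Fin (m j) :=
  ⟨k, ⟨m k - 1, Nat.sub_lt h Nat.one_pos⟩⟩

/-- The bordered matrix `𝕏_i(n)`: the multi-Wroński matrix `𝒲(n)` augmented by the
column `(Δ_j^p χ_j(n))_{(j,p)}` built from the tangent solution `χ` and by the bottom
row `(Δ_i^{m_i} ξ^a_i(n))_a, Δ_i^{m_i} χ_i(n)`. -/
def Xmat {N : ℕ} (m : Fin N → ℕ)
    (ξ : (Σ j : Fin N, Fin (m j)) → Fin N → (Fin N → ℤ) → ℝ)
    (χ : Fin N → (Fin N → ℤ) → ℝ) (i : Fin N) (n : Fin N → ℤ) :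
    Matrix (Option (Σ j : Fin N, Fin (m j))) (Option (Σ j : Fin N, Fin (m j))) ℝ :=
  Matrix.of fun r a =>
    match r, a with
    | some r, some a => (Δ r.1)^[(r.2 : ℕ)] (ξ a r.1) n
    | some r, none => (Δ r.1)^[(r.2 : ℕ)] (χ r.1) n
    | none, some a => (Δ i)^[m i] (ξ a i) n
    | none, none => (Δ i)^[m i] (χ i) n

/-! ### Auxiliary determinant lemmas -/

section AuxDet

variable {κ : Type*} [Fintype κ] [DecidableEq κ]

lemma aux_det_updateRow_finset_sum (X : Matrix κ κ ℝ) (s₀ : κ) (c : κ → ℝ) (g : κ → κ → ℝ)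
    (s : Finset κ) :
    (X.updateRow s₀ (∑ t ∈ s, c t • g t)).det = ∑ t ∈ s, c t * (X.updateRow s₀ (g t)).det := by
  induction s using Finset.induction_on with
  | empty =>
      simp only [Finset.sum_empty]
      exact Matrix.det_eq_zero_of_row_eq_zero s₀ (fun j => by simp)
  | @insert a s h ih =>
      rw [Finset.sum_insert h, Matrix.det_updateRow_add, Matrix.det_updateRow_smul, ih,
        Finset.sum_insert h]

/-- Plücker-type exchange identity for determinants. -/
lemma aux_exchange (X Y : Matrix κ κ ℝ) (s₀ : κ) :
    X.det * Y.det = ∑ t, (X.updateRow s₀ (Y t)).det * (Y.updateRow t (X s₀)).det := by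
  have hc : (∑ t, ((Y.updateRow t (X s₀)).det) • Y t) = Y.det • X s₀ := by
    funext a
    have h := congrFun (Matrix.mulVec_cramer Y.transpose (X s₀)) a
    simp only [Matrix.mulVec, dotProduct, Matrix.cramer_apply,
      Matrix.updateCol_transpose, Matrix.det_transpose, Matrix.transpose_apply] at h
    rw [Finset.sum_apply]
    simpa [mul_comm] using h
  calc X.det * Y.det
      = Y.det * (X.updateRow s₀ (X s₀)).det := by rw [Matrix.updateRow_eq_self]; ring
    _ = (X.updateRow s₀ (Y.det • X s₀)).det := by rw [Matrix.det_updateRow_smul]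
    _ = (X.updateRow s₀ (∑ t, ((Y.updateRow t (X s₀)).det) • Y t)).det := by rw [hc]
    _ = ∑ t, (Y.updateRow t (X s₀)).det * (X.updateRow s₀ (Y t)).det :=
        aux_det_updateRow_finset_sum X s₀ _ _ _
    _ = ∑ t, (X.updateRow s₀ (Y t)).det * (Y.updateRow t (X s₀)).det :=
        Finset.sum_congr rfl (fun t _ => mul_comm _ _)

end AuxDet

section AuxOption

variable {ι : Type*} [Fintype ι] [DecidableEq ι]

lemma aux_det_updateRow_span (B : Matrix (Option ι) (Option ι) ℝ)
    (v : ι → Option ι → ℝ) (hv : ∀ r, B (some r) = v r) {u : Option ι → ℝ}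
    (hu : u ∈ Submodule.span ℝ (Set.range v)) : (B.updateRow none u).det = 0 := by
  induction hu using Submodule.span_induction with
  | mem x h =>
      obtain ⟨r, rfl⟩ := h
      refine Matrix.det_zero_of_row_eq (i := some r) (j := none) (by simp) ?_
      rw [Matrix.updateRow_ne (Option.some_ne_none r), Matrix.updateRow_self, hv]
  | zero => exact Matrix.det_eq_zero_of_row_eq_zero none (fun j => by simp)
  | add x y hx hy ihx ihy => rw [Matrix.det_updateRow_add, ihx, ihy, add_zero]
  | smul a x hx ih => rw [Matrix.det_updateRow_smul, ih, mul_zero]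

/-- A determinant over `Option ι` whose `none` row is the coordinate vector at `none`
equals the determinant of the `some`-`some` submatrix. -/
lemma aux_det_option (B : Matrix (Option ι) (Option ι) ℝ)
    (hB : B none = Pi.single none 1) : B.det = (B.submatrix some some).det := by
  let e : PUnit.{1} ⊕ ι ≃ Option ι :=
    (Equiv.sumComm PUnit.{1} ι).trans (Equiv.optionEquivSumPUnit ι).symm
  rw [← Matrix.det_submatrix_equiv_self e B]
  have hBe : B.submatrix e e = Matrix.fromBlocks (Matrix.of fun _ _ => (1 : ℝ)) 0
      (Matrix.of fun r _ => B (some r) none) (B.submatrix some some) := by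
    ext x y
    have he1 : ∀ u : PUnit.{1}, e (Sum.inl u) = none := fun u => by simp [e]
    have he2 : ∀ r : ι, e (Sum.inr r) = some r := fun r => by simp [e]
    cases x with
    | inl u =>
        cases y with
        | inl u' =>
            simp [Matrix.submatrix_apply, he1, hB, Matrix.fromBlocks]
        | inr r =>
            simp [Matrix.submatrix_apply, he1, he2, hB, Matrix.fromBlocks,
              Pi.single_eq_of_ne (Option.some_ne_none r)]
    | inr r =>
        cases y with
        | inl u' => simp [Matrix.submatrix_apply, he1, he2, Matrix.fromBlocks]
        | inr r' => simp [Matrix.submatrix_apply, he2, Matrix.fromBlocks]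
  rw [hBe, Matrix.det_fromBlocks_zero₁₂]
  simp [Matrix.det_unique]

end AuxOption

/-! ### The vector-valued difference operator and the span lemma -/

section AuxDV

/-- Vector-valued difference operator. -/
def DV {N : ℕ} {V : Type*} [AddCommGroup V] (j : Fin N) (F : (Fin N → ℤ) → V) :
    (Fin N → ℤ) → V :=
  fun n => F (n + Pi.single j 1) - F n

lemma DV_apply_comp {N : ℕ} {ι : Type*} (j : Fin N) (p : ℕ) (F : (Fin N → ℤ) → (ι → ℝ))
    (a : ι) (n : Fin N → ℤ) :
    (DV j)^[p] F n a = (Δ j)^[p] (fun n' => F n' a) n := by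
  induction p generalizing F with
  | zero => rfl
  | succ p ih =>
      rw [Function.iterate_succ_apply, Function.iterate_succ_apply, ih (DV j F)]
      congr 1

lemma DV_comm {N : ℕ} {V : Type*} [AddCommGroup V] (j k : Fin N) (F : (Fin N → ℤ) → V) :
    DV j (DV k F) = DV k (DV j F) := by
  funext n
  simp only [DV]
  rw [add_right_comm n (Pi.single k 1) (Pi.single j 1)]
  abel

lemma DV_step {N : ℕ} {V : Type*} [AddCommGroup V] (j : Fin N) (F : (Fin N → ℤ) → V)
    (n : Fin N → ℤ) : F (n + Pi.single j 1) = F n + DV j F n := by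
  simp [DV]

/-- The key span lemma: `Δ_k` of a `j`-block Wroński row lies in the span of the lower
`j`-block rows together with `Θ k`. -/
lemma aux_spanA {N : ℕ} {W : Type*} [AddCommGroup W] [Module ℝ W]
    (Q : Fin N → Fin N → (Fin N → ℤ) → ℝ)
    (Θ : Fin N → (Fin N → ℤ) → W)
    (hΘ : ∀ j k : Fin N, j ≠ k → ∀ n, DV k (Θ j) n = T k (Q j k) n • Θ k n)
    (j k : Fin N) (hjk : j ≠ k) (p : ℕ) (n : Fin N → ℤ) :
    DV k ((DV j)^[p] (Θ j)) n ∈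
      Submodule.span ℝ ({x | ∃ q < p, x = (DV j)^[q] (Θ j) n} ∪ {Θ k n}) := by
  induction p generalizing n with
  | zero =>
      rw [Function.iterate_zero_apply, hΘ j k hjk n]
      exact Submodule.smul_mem _ _ (Submodule.subset_span (Or.inr rfl))
  | succ p ih =>
      have hre : DV k ((DV j)^[p + 1] (Θ j)) n
          = DV k ((DV j)^[p] (Θ j)) (n + Pi.single j 1) - DV k ((DV j)^[p] (Θ j)) n := by
        rw [Function.iterate_succ_apply']
        have := congrFun (DV_comm j k ((DV j)^[p] (Θ j))) n
        rw [← this]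
        rfl
      rw [hre]
      have hmono2 : Submodule.span ℝ ({x | ∃ q < p, x = (DV j)^[q] (Θ j) n} ∪ {Θ k n}) ≤
          Submodule.span ℝ ({x | ∃ q < p + 1, x = (DV j)^[q] (Θ j) n} ∪ {Θ k n}) := by
        apply Submodule.span_mono
        apply Set.union_subset_union_left
        intro x hx
        obtain ⟨q, hq, rfl⟩ := hx
        exact ⟨q, Nat.lt_succ_of_lt hq, rfl⟩
      have hmono1 : Submodule.span ℝ
            ({x | ∃ q < p, x = (DV j)^[q] (Θ j) (n + Pi.single j 1)} ∪
              {Θ k (n + Pi.single j 1)}) ≤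
          Submodule.span ℝ ({x | ∃ q < p + 1, x = (DV j)^[q] (Θ j) n} ∪ {Θ k n}) := by
        rw [Submodule.span_le]
        rintro x (hx | hx)
        · obtain ⟨q, hq, rfl⟩ := hx
          rw [DV_step j ((DV j)^[q] (Θ j)) n]
          refine Submodule.add_mem _ ?_ ?_
          · exact Submodule.subset_span (Or.inl ⟨q, Nat.lt_succ_of_lt hq, rfl⟩)
          · have h1 : DV j ((DV j)^[q] (Θ j)) n = (DV j)^[q + 1] (Θ j) n := by
              rw [Function.iterate_succ_apply']
            rw [h1]
            exact Submodule.subset_span (Or.inl ⟨q + 1, Nat.succ_lt_succ hq, rfl⟩)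
        · rw [Set.mem_singleton_iff] at hx
          subst hx
          rw [DV_step j (Θ k) n, hΘ k j hjk.symm n]
          refine Submodule.add_mem _ ?_ (Submodule.smul_mem _ _ ?_)
          · exact Submodule.subset_span (Or.inr rfl)
          · exact Submodule.subset_span (Or.inl ⟨0, Nat.succ_pos p, rfl⟩)
      exact Submodule.sub_mem _ (hmono1 (ih (n + Pi.single j 1))) (hmono2 (ih n))

end AuxDV

/-! ### Bridging the concrete matrices with the vector-valued rows -/

section AuxBridge

variable {N : ℕ} {m : Fin N → ℕ}

/-- The vector of all `M+1` tangent solutions. -/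
def Theta (ξ : (Σ j : Fin N, Fin (m j)) → Fin N → (Fin N → ℤ) → ℝ)
    (χ : Fin N → (Fin N → ℤ) → ℝ) (j : Fin N) (nn : Fin N → ℤ) :
    Option (Σ j : Fin N, Fin (m j)) → ℝ :=
  fun a? => match a? with
  | some a => ξ a j nn
  | none => χ j nn

lemma Xmat_row_some (ξ : (Σ j : Fin N, Fin (m j)) → Fin N → (Fin N → ℤ) → ℝ)
    (χ : Fin N → (Fin N → ℤ) → ℝ) (i' : Fin N) (nn : Fin N → ℤ)
    (r : Σ j : Fin N, Fin (m j)) :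
    Xmat m ξ χ i' nn (some r) = (DV r.1)^[(r.2 : ℕ)] (Theta ξ χ r.1) nn := by
  funext a?
  cases a? with
  | some a => rw [DV_apply_comp]; rfl
  | none => rw [DV_apply_comp]; rfl

lemma Xmat_row_none (ξ : (Σ j : Fin N, Fin (m j)) → Fin N → (Fin N → ℤ) → ℝ)
    (χ : Fin N → (Fin N → ℤ) → ℝ) (i' : Fin N) (nn : Fin N → ℤ) :
    Xmat m ξ χ i' nn none = (DV i')^[m i'] (Theta ξ χ i') nn := by
  funext a?
  cases a? with
  | some a => rw [DV_apply_comp]; rfl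
  | none => rw [DV_apply_comp]; rfl

lemma Theta_tangent (Q : Fin N → Fin N → (Fin N → ℤ) → ℝ)
    (ξ : (Σ j : Fin N, Fin (m j)) → Fin N → (Fin N → ℤ) → ℝ)
    (hξ : ∀ a, ∀ j k : Fin N, j ≠ k → Δ k (ξ a j) = T k (Q j k) * ξ a k)
    (χ : Fin N → (Fin N → ℤ) → ℝ)
    (hχ : ∀ j k : Fin N, j ≠ k → Δ k (χ j) = T k (Q j k) * χ k) :
    ∀ j k' : Fin N, j ≠ k' → ∀ nn,
      DV k' (Theta ξ χ j) nn = T k' (Q j k') nn • Theta ξ χ k' nn := by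
  intro j k' h nn
  funext a?
  cases a? with
  | some a =>
      have hh := congrFun (hξ a j k' h) nn
      simpa [DV, Δ, Theta, Pi.sub_apply, Pi.mul_apply, smul_eq_mul] using hh
  | none =>
      have hh := congrFun (hχ j k' h) nn
      simpa [DV, Δ, Theta, Pi.sub_apply, Pi.mul_apply, smul_eq_mul] using hh

end AuxBridge

/-- The bilinear identity
`det 𝒲 · Δ_k(det 𝕏_i) − det 𝕏_i · Δ_k(det 𝒲) + det 𝕏_k · T_k(det 𝒲_{ik}) = 0`
for `i ≠ k`, where `𝒲_{ik}` is `𝒲` with the last row of the `k`-th block replaced by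
`Δ_i^{m_i} ξ_i`. -/
theorem statement_17 (N : ℕ) (hN : 2 ≤ N)
    (Q : Fin N → Fin N → (Fin N → ℤ) → ℝ)
    (m : Fin N → ℕ) (hm : ∀ j, 0 < m j)
    (ξ : (Σ j : Fin N, Fin (m j)) → Fin N → (Fin N → ℤ) → ℝ)
    (hξ : ∀ a, ∀ j k : Fin N, j ≠ k → Δ k (ξ a j) = T k (Q j k) * ξ a k)
    (χ : Fin N → (Fin N → ℤ) → ℝ)
    (hχ : ∀ j k : Fin N, j ≠ k → Δ k (χ j) = T k (Q j k) * χ k) :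
    ∀ i k : Fin N, i ≠ k → ∀ n : Fin N → ℤ,
      (Wmat m ξ n).det
          * ((Xmat m ξ χ i (n + Pi.single k 1)).det - (Xmat m ξ χ i n).det)
        - (Xmat m ξ χ i n).det
          * ((Wmat m ξ (n + Pi.single k 1)).det - (Wmat m ξ n).det)
        + (Xmat m ξ χ k n).det
          * ((Wmat m ξ (n + Pi.single k 1)).updateRow (lastRow m k (hm k))
              (fun a => (Δ i)^[m i] (ξ a i) (n + Pi.single k 1))).det
        = 0 := by
  intro i k hik n
  classical
  have hΘ := Theta_tangent Q ξ hξ χ hχ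
  set n' : Fin N → ℤ := n + Pi.single k 1 with hn'
  set Wn := Wmat m ξ n with hWn
  set Wn' := Wmat m ξ n' with hWn'
  set Vm := Wn'.updateRow (lastRow m k (hm k))
      (fun a => (Δ i)^[m i] (ξ a i) n') with hVm
  set Xi := Xmat m ξ χ i n with hXi
  set Xk := Xmat m ξ χ k n with hXk
  set Y := Xmat m ξ χ i n' with hY
  set v : (Σ j : Fin N, Fin (m j)) → Option (Σ j : Fin N, Fin (m j)) → ℝ :=
    fun r => (DV r.1)^[(r.2 : ℕ)] (Theta ξ χ r.1) n with hv
  set U₀ := Submodule.span ℝ (Set.range v) with hU₀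
  set e0 : Option (Σ j : Fin N, Fin (m j)) → ℝ := Pi.single none 1 with he0
  set X1 := Xi.updateRow none e0 with hX1
  -- rows of the matrices
  have hXisome : ∀ r, Xi (some r) = v r := by
    intro r; simp only [hXi, hv]; exact Xmat_row_some ξ χ i n r
  have hXksome : ∀ r, Xk (some r) = v r := by
    intro r; simp only [hXk, hv]; exact Xmat_row_some ξ χ k n r
  have hXinone : Xi none = (DV i)^[m i] (Theta ξ χ i) n := by
    simp only [hXi]; exact Xmat_row_none ξ χ i n
  have hXknone : Xk none = (DV k)^[m k] (Theta ξ χ k) n := by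
    simp only [hXk]; exact Xmat_row_none ξ χ k n
  have hYsome : ∀ r, Y (some r) = (DV r.1)^[(r.2 : ℕ)] (Theta ξ χ r.1) n' := by
    intro r; simp only [hY]; exact Xmat_row_some ξ χ i n' r
  have hYnone : Y none = (DV i)^[m i] (Theta ξ χ i) n' := by
    simp only [hY]; exact Xmat_row_none ξ χ i n'
  have hX1some : ∀ r, X1 (some r) = v r := by
    intro r
    simp only [hX1]
    rw [Matrix.updateRow_ne (Option.some_ne_none r)]
    exact hXisome r
  have hX1none : X1 none = e0 := by
    simp only [hX1]; exact Matrix.updateRow_self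
  -- the span inclusions
  have hspanle : ∀ (j : Fin N), j ≠ k → ∀ (p : ℕ), p ≤ m j →
      Submodule.span ℝ ({x | ∃ q < p, x = (DV j)^[q] (Theta ξ χ j) n} ∪ {Theta ξ χ k n})
        ≤ U₀ := by
    intro j hj p hp
    rw [hU₀, Submodule.span_le]
    rintro x (hx | hx)
    · obtain ⟨q, hq, rfl⟩ := hx
      exact Submodule.subset_span ⟨⟨j, ⟨q, lt_of_lt_of_le hq hp⟩⟩, by simp only [hv]⟩
    · rw [Set.mem_singleton_iff] at hx
      subst hx
      exact Submodule.subset_span ⟨⟨k, ⟨0, hm k⟩⟩, by simp only [hv, Function.iterate_zero_apply]⟩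
  -- the three structural facts about the shifted rows
  have hH1 : ∀ r, r ≠ lastRow m k (hm k) → Y (some r) - v r ∈ U₀ := by
    intro r hr
    have hsplit : Y (some r) = v r + DV k ((DV r.1)^[(r.2 : ℕ)] (Theta ξ χ r.1)) n := by
      rw [hYsome r, hn', DV_step k ((DV r.1)^[(r.2 : ℕ)] (Theta ξ χ r.1)) n]
    rw [hsplit, add_sub_cancel_left]
    obtain ⟨j, q⟩ := r
    by_cases hj : j = k
    · subst hj
      have hqv : (q : ℕ) < m j - 1 := by
        have h1 : (q : ℕ) ≤ m j - 1 := Nat.le_pred_of_lt q.2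
        have h2 : (q : ℕ) ≠ m j - 1 := by
          intro hq
          apply hr
          simp only [lastRow]
          congr 1
          exact Fin.ext hq
        omega
      have hiter : DV j ((DV j)^[(q : ℕ)] (Theta ξ χ j)) n
          = v ⟨j, ⟨(q : ℕ) + 1, by omega⟩⟩ := by
        simp only [hv]
        exact (congrFun (Function.iterate_succ_apply' (DV j) (q : ℕ) (Theta ξ χ j)) n).symm
      rw [hiter]
      exact Submodule.subset_span ⟨_, rfl⟩
    · exact hspanle j hj (q : ℕ) (le_of_lt q.2)
        (aux_spanA Q (Theta ξ χ) hΘ j k hj (q : ℕ) n)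
  have hH2 : Y (some (lastRow m k (hm k))) = v (lastRow m k (hm k)) + Xk none := by
    rw [hYsome, hn',
      DV_step k ((DV (lastRow m k (hm k)).1)^[((lastRow m k (hm k)).2 : ℕ)]
        (Theta ξ χ (lastRow m k (hm k)).1)) n]
    congr 1
    rw [hXknone]
    have h2 : (DV k)^[m k - 1 + 1] (Theta ξ χ k) = (DV k)^[m k] (Theta ξ χ k) := by
      rw [Nat.sub_add_cancel (hm k)]
    exact congrFun ((Function.iterate_succ_apply' (DV k) (m k - 1)
      (Theta ξ χ k)).symm.trans h2) n
  have hH3 : Y none - Xi none ∈ U₀ := by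
    have hsplit : Y none = Xi none + DV k ((DV i)^[m i] (Theta ξ χ i)) n := by
      rw [hYnone, hXinone, hn', DV_step k ((DV i)^[m i] (Theta ξ χ i)) n]
    rw [hsplit, add_sub_cancel_left]
    exact hspanle i hik (m i) le_rfl (aux_spanA Q (Theta ξ χ) hΘ i k hik (m i) n)
  -- determinant of X1
  have hdetX1 : X1.det = Wn.det := by
    rw [aux_det_option X1 hX1none]
    congr 1
  -- collapsing the double update
  have hcolgen : ∀ u : Option (Σ j : Fin N, Fin (m j)) → ℝ,
      X1.updateRow none u = Xi.updateRow none u := by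
    intro u
    ext t a
    rcases t with _ | r
    · rw [Matrix.updateRow_self, Matrix.updateRow_self]
    · rw [Matrix.updateRow_ne (Option.some_ne_none r),
        Matrix.updateRow_ne (Option.some_ne_none r)]
      exact congrFun ((hX1some r).trans (hXisome r).symm) a
  -- the exchange identity
  have hEX := aux_exchange X1 Y none
  rw [hX1none] at hEX
  rw [show (Finset.univ : Finset (Option (Σ j : Fin N, Fin (m j))))
      = Finset.insertNone Finset.univ from univ_option _, Finset.sum_insertNone] at hEX
  -- the `none` term
  have hterm_none : (X1.updateRow none (Y none)).det * (Y.updateRow none e0).det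
      = Xi.det * Wn'.det := by
    have h1 : (Xi.updateRow none (Y none)).det = Xi.det := by
      have hsplit : Y none = Xi none + (Y none - Xi none) := by abel
      rw [hsplit, Matrix.det_updateRow_add, Matrix.updateRow_eq_self,
        aux_det_updateRow_span Xi v hXisome hH3, add_zero]
    have h2 : (Y.updateRow none e0).det = Wn'.det := by
      rw [aux_det_option _ Matrix.updateRow_self]
      congr 1
    rw [hcolgen, h1, h2]
  -- the vanishing terms
  have hterm_zero : ∀ r, r ≠ lastRow m k (hm k) →
      (X1.updateRow none (Y (some r))).det * (Y.updateRow (some r) e0).det = 0 := by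
    intro r hr
    have hzero : (Xi.updateRow none (Y (some r))).det = 0 := by
      have hsplit : Y (some r) = v r + (Y (some r) - v r) := by abel
      rw [hsplit, Matrix.det_updateRow_add]
      have ha : (Xi.updateRow none (v r)).det = 0 := by
        refine Matrix.det_zero_of_row_eq (i := some r) (j := none)
          (Option.some_ne_none r) ?_
        rw [Matrix.updateRow_ne (Option.some_ne_none r), Matrix.updateRow_self, hXisome r]
      rw [ha, aux_det_updateRow_span Xi v hXisome (hH1 r hr), add_zero]
    rw [hcolgen, hzero, zero_mul]
  -- the `lastRow` term
  have hterm_r0 : (X1.updateRow none (Y (some (lastRow m k (hm k))))).det *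
      (Y.updateRow (some (lastRow m k (hm k))) e0).det = Xk.det * (- Vm.det) := by
    have hfac1 : (X1.updateRow none (Y (some (lastRow m k (hm k))))).det = Xk.det := by
      rw [hcolgen, hH2, Matrix.det_updateRow_add]
      have ha : (Xi.updateRow none (v (lastRow m k (hm k)))).det = 0 := by
        refine Matrix.det_zero_of_row_eq (i := some (lastRow m k (hm k))) (j := none)
          (Option.some_ne_none _) ?_
        rw [Matrix.updateRow_ne (Option.some_ne_none _), Matrix.updateRow_self, hXisome]
      have hb : Xi.updateRow none (Xk none) = Xk := by
        ext t a
        rcases t with _ | r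
        · rw [Matrix.updateRow_self]
        · rw [Matrix.updateRow_ne (Option.some_ne_none r)]
          exact congrFun ((hXisome r).trans (hXksome r).symm) a
      rw [ha, hb, zero_add]
    have hfac2 : (Y.updateRow (some (lastRow m k (hm k))) e0).det = - Vm.det := by
      have hperm : Y.updateRow (some (lastRow m k (hm k))) e0
          = ((Y.updateRow (some (lastRow m k (hm k))) (Y none)).updateRow none e0).submatrix
              (Equiv.swap (some (lastRow m k (hm k))) none) id := by
        ext t a
        rcases t with _ | r
        · rw [Matrix.submatrix_apply, id_eq, Equiv.swap_apply_right,
            Matrix.updateRow_ne (Option.some_ne_none _), Matrix.updateRow_self,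
            Matrix.updateRow_ne (Ne.symm (Option.some_ne_none _))]
        · by_cases hr : r = lastRow m k (hm k)
          · subst hr
            rw [Matrix.submatrix_apply, id_eq, Equiv.swap_apply_left,
              Matrix.updateRow_self, Matrix.updateRow_self]
          · have h1 : (some r : Option (Σ j : Fin N, Fin (m j)))
                ≠ some (lastRow m k (hm k)) := by simpa using hr
            rw [Matrix.submatrix_apply, id_eq,
              Equiv.swap_apply_of_ne_of_ne h1 (Option.some_ne_none r),
              Matrix.updateRow_ne (Option.some_ne_none r),
              Matrix.updateRow_ne h1, Matrix.updateRow_ne h1]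
      have hVtdet : ((Y.updateRow (some (lastRow m k (hm k))) (Y none)).updateRow
          none e0).det = Vm.det := by
        rw [aux_det_option _ Matrix.updateRow_self]
        congr 1
        ext r a
        rw [Matrix.submatrix_apply, Matrix.updateRow_ne (Option.some_ne_none r)]
        by_cases hr : r = lastRow m k (hm k)
        · subst hr
          rw [Matrix.updateRow_self, hVm, Matrix.updateRow_self, hYnone]
          rw [DV_apply_comp]
          rfl
        · have h1 : (some r : Option (Σ j : Fin N, Fin (m j)))
              ≠ some (lastRow m k (hm k)) := by simpa using hr
          rw [Matrix.updateRow_ne h1, hVm, Matrix.updateRow_ne hr, hY, hWn']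
          rfl
      rw [hperm, Matrix.det_permute, Equiv.Perm.sign_swap (Option.some_ne_none _), hVtdet]
      simp
    rw [hfac1, hfac2]
  rw [hterm_none] at hEX
  rw [Finset.sum_eq_single (lastRow m k (hm k))
    (fun r _ hr => hterm_zero r hr)
    (fun h => absurd (Finset.mem_univ _) h)] at hEX
  rw [hterm_r0, hdetX1] at hEX
  linear_combination hEX
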